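/- Let T : S → S be a contraction with constant δ ∈ (0,1) and fixed point x⋆ on a nonempty closed convex subset S of a Banach space. Let {u_n} be the CR iteration (u_{n+1} = (1-α_n¹)v_n + α_n¹Tv_n, v_n = (1-α_n²)Tu_n + α_n²Ty_n, y_n = (1-α_n³)u_n + α_n³Tu_n) and {p_n} the Karahan–Özdemir iteration, with common scalar sequences α_n^i ∈ [0,1] satisfying ∑ α_k¹ = ∞. Then ‖p_{n+1} - u_{n+1}‖ ≤ [1 - α_n¹(1-δ)] ‖p_n - u_n‖ + (1-α_n¹)(2 + α_n² δ α_n³)(1+δ) ‖p_n - x⋆‖ for all n. -/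
import Mathlib


open Filter

lemma combo_norm {B : Type*} [NormedAddCommGroup B] [NormedSpace ℝ B]
    (a : ℝ) (h0 : 0 ≤ a) (h1 : a ≤ 1) (x z : B) :
    ‖(1 - a) • x + a • z‖ ≤ (1 - a) * ‖x‖ + a * ‖z‖ := by
  calc ‖(1 - a) • x + a • z‖ ≤ ‖(1 - a) • x‖ + ‖a • z‖ := norm_add_le _ _
  _ = (1 - a) * ‖x‖ + a * ‖z‖ := by
      rw [norm_smul, norm_smul, Real.norm_eq_abs, Real.norm_eq_abs,
        abs_of_nonneg (by linarith), abs_of_nonneg h0]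

theorem stmt_6 {B : Type*} [NormedAddCommGroup B] [NormedSpace ℝ B] [CompleteSpace B]
    (S : Set B) (hS : S.Nonempty) (hScl : IsClosed S) (hSco : Convex ℝ S)
    (T : B → B) (hTS : ∀ x ∈ S, T x ∈ S)
    (δ : ℝ) (hδ : δ ∈ Set.Ioo (0 : ℝ) 1)
    (hT : ∀ x ∈ S, ∀ y ∈ S, ‖T x - T y‖ ≤ δ * ‖x - y‖)
    (xs : B) (hxs : xs ∈ S) (hfix : T xs = xs)
    (α1 α2 α3 : ℕ → ℝ)
    (hα1 : ∀ n, α1 n ∈ Set.Icc (0 : ℝ) 1) (hα2 : ∀ n, α2 n ∈ Set.Icc (0 : ℝ) 1)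
    (hα3 : ∀ n, α3 n ∈ Set.Icc (0 : ℝ) 1)
    (hdiv : Tendsto (fun n => ∑ k ∈ Finset.range n, α1 k) atTop atTop)
    (p q r : ℕ → B) (hp0 : p 0 ∈ S)
    (hp : ∀ n, p (n + 1) = (1 - α1 n) • T (p n) + α1 n • T (q n))
    (hq : ∀ n, q n = (1 - α2 n) • T (p n) + α2 n • T (r n))
    (hr : ∀ n, r n = (1 - α3 n) • p n + α3 n • T (p n))
    (u v y : ℕ → B) (hu0 : u 0 ∈ S)
    (hu : ∀ n, u (n + 1) = (1 - α1 n) • v n + α1 n • T (v n))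
    (hv : ∀ n, v n = (1 - α2 n) • T (u n) + α2 n • T (y n))
    (hy : ∀ n, y n = (1 - α3 n) • u n + α3 n • T (u n)) :
    ∀ n, ‖p (n + 1) - u (n + 1)‖ ≤
      (1 - α1 n * (1 - δ)) * ‖p n - u n‖ +
        (1 - α1 n) * (2 + α2 n * δ * α3 n) * (1 + δ) * ‖p n - xs‖ := by
  obtain ⟨hδ0, hδ1⟩ := hδ
  -- membership helper
  have hcomb : ∀ (a : ℝ), 0 ≤ a → a ≤ 1 → ∀ x ∈ S, ∀ z ∈ S, (1 - a) • x + a • z ∈ S := by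
    intro a h0 h1 x hx z hz
    exact hSco hx hz (by linarith) h0 (by ring)
  have hmem : ∀ n, p n ∈ S ∧ u n ∈ S := by
    intro n
    induction n with
    | zero => exact ⟨hp0, hu0⟩
    | succ n ih =>
      obtain ⟨hpn, hun⟩ := ih
      have hrn : r n ∈ S := by
        rw [hr n]
        exact hcomb _ (hα3 n).1 (hα3 n).2 _ hpn _ (hTS _ hpn)
      have hyn : y n ∈ S := by
        rw [hy n]
        exact hcomb _ (hα3 n).1 (hα3 n).2 _ hun _ (hTS _ hun)
      have hqn : q n ∈ S := by
        rw [hq n]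
        exact hcomb _ (hα2 n).1 (hα2 n).2 _ (hTS _ hpn) _ (hTS _ hrn)
      have hvn : v n ∈ S := by
        rw [hv n]
        exact hcomb _ (hα2 n).1 (hα2 n).2 _ (hTS _ hun) _ (hTS _ hyn)
      constructor
      · rw [hp n]
        exact hcomb _ (hα1 n).1 (hα1 n).2 _ (hTS _ hpn) _ (hTS _ hqn)
      · rw [hu n]
        exact hcomb _ (hα1 n).1 (hα1 n).2 _ hvn _ (hTS _ hvn)
  intro n
  obtain ⟨hpn, hun⟩ := hmem n
  have hrn : r n ∈ S := by
    rw [hr n]; exact hcomb _ (hα3 n).1 (hα3 n).2 _ hpn _ (hTS _ hpn)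
  have hyn : y n ∈ S := by
    rw [hy n]; exact hcomb _ (hα3 n).1 (hα3 n).2 _ hun _ (hTS _ hun)
  have hqn : q n ∈ S := by
    rw [hq n]; exact hcomb _ (hα2 n).1 (hα2 n).2 _ (hTS _ hpn) _ (hTS _ hrn)
  have hvn : v n ∈ S := by
    rw [hv n]; exact hcomb _ (hα2 n).1 (hα2 n).2 _ (hTS _ hun) _ (hTS _ hyn)
  obtain ⟨ha10, ha11⟩ := hα1 n
  obtain ⟨ha20, ha21⟩ := hα2 n
  obtain ⟨ha30, ha31⟩ := hα3 n
  set P := ‖p n - u n‖ with hP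
  set Q := ‖p n - xs‖ with hQ
  have hPnn : 0 ≤ P := norm_nonneg _
  have hQnn : 0 ≤ Q := norm_nonneg _
  -- contraction bounds
  have hTpu : ‖T (p n) - T (u n)‖ ≤ δ * P := hT _ hpn _ hun
  -- ‖p n - T (p n)‖ ≤ (1+δ) Q
  have hpt : ‖p n - T (p n)‖ ≤ (1 + δ) * Q := by
    have e : p n - T (p n) = (p n - xs) + (T xs - T (p n)) := by rw [hfix]; abel
    have h2 : ‖T xs - T (p n)‖ ≤ δ * Q := by
      rw [← norm_neg]
      simpa [hQ, norm_sub_rev] using hT _ hpn _ hxs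
    calc ‖p n - T (p n)‖ ≤ ‖p n - xs‖ + ‖T xs - T (p n)‖ := by rw [e]; exact norm_add_le _ _
    _ ≤ Q + δ * Q := by exact add_le_add le_rfl h2
    _ = (1 + δ) * Q := by ring
  -- ‖r n - y n‖ ≤ P
  have hry : ‖r n - y n‖ ≤ P := by
    have e : r n - y n = (1 - α3 n) • (p n - u n) + α3 n • (T (p n) - T (u n)) := by
      rw [hr n, hy n]; module
    calc ‖r n - y n‖ ≤ (1 - α3 n) * ‖p n - u n‖ + α3 n * ‖T (p n) - T (u n)‖ := by
          rw [e]; exact combo_norm _ ha30 ha31 _ _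
    _ ≤ (1 - α3 n) * P + α3 n * (δ * P) := by
          refine add_le_add le_rfl (mul_le_mul_of_nonneg_left hTpu ha30)
    _ ≤ P := by nlinarith [mul_nonneg (mul_nonneg ha30 (by linarith : (0:ℝ) ≤ 1 - δ)) hPnn]
  -- ‖p n - y n‖ ≤ P + α3 (1+δ) Q
  have hpy : ‖p n - y n‖ ≤ P + α3 n * ((1 + δ) * Q) := by
    have e : p n - y n = (1 - α3 n) • (p n - u n) +
        α3 n • ((p n - T (p n)) + (T (p n) - T (u n))) := by
      rw [hy n]; module
    calc ‖p n - y n‖ ≤ (1 - α3 n) * ‖p n - u n‖ +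
          α3 n * ‖(p n - T (p n)) + (T (p n) - T (u n))‖ := by
          rw [e]; exact combo_norm _ ha30 ha31 _ _
    _ ≤ (1 - α3 n) * P + α3 n * ((1 + δ) * Q + δ * P) := by
          refine add_le_add le_rfl (mul_le_mul_of_nonneg_left ?_ ha30)
          calc ‖(p n - T (p n)) + (T (p n) - T (u n))‖ ≤
              ‖p n - T (p n)‖ + ‖T (p n) - T (u n)‖ := norm_add_le _ _
          _ ≤ (1 + δ) * Q + δ * P := add_le_add hpt hTpu
    _ ≤ P + α3 n * ((1 + δ) * Q) := by
          nlinarith [mul_nonneg (mul_nonneg ha30 (by linarith : (0:ℝ) ≤ 1 - δ)) hPnn]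
  -- ‖T p - v‖ ≤ δ P + α2 δ α3 (1+δ) Q
  have hTpv : ‖T (p n) - v n‖ ≤ δ * P + α2 n * δ * (α3 n * ((1 + δ) * Q)) := by
    have e : T (p n) - v n = (1 - α2 n) • (T (p n) - T (u n)) +
        α2 n • (T (p n) - T (y n)) := by
      rw [hv n]; module
    have hpy' : ‖T (p n) - T (y n)‖ ≤ δ * (P + α3 n * ((1 + δ) * Q)) := by
      calc ‖T (p n) - T (y n)‖ ≤ δ * ‖p n - y n‖ := hT _ hpn _ hyn
      _ ≤ δ * (P + α3 n * ((1 + δ) * Q)) := by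
          exact mul_le_mul_of_nonneg_left hpy (le_of_lt hδ0)
    calc ‖T (p n) - v n‖ ≤ (1 - α2 n) * ‖T (p n) - T (u n)‖ +
          α2 n * ‖T (p n) - T (y n)‖ := by
          rw [e]; exact combo_norm _ ha20 ha21 _ _
    _ ≤ (1 - α2 n) * (δ * P) + α2 n * (δ * (P + α3 n * ((1 + δ) * Q))) := by
          exact add_le_add (mul_le_mul_of_nonneg_left hTpu (by linarith))
            (mul_le_mul_of_nonneg_left hpy' ha20)
    _ = δ * P + α2 n * δ * (α3 n * ((1 + δ) * Q)) := by ring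
  -- ‖q - v‖ ≤ δ P
  have hqv : ‖q n - v n‖ ≤ δ * P := by
    have e : q n - v n = (1 - α2 n) • (T (p n) - T (u n)) + α2 n • (T (r n) - T (y n)) := by
      rw [hq n, hv n]; module
    have hry' : ‖T (r n) - T (y n)‖ ≤ δ * P := by
      calc ‖T (r n) - T (y n)‖ ≤ δ * ‖r n - y n‖ := hT _ hrn _ hyn
      _ ≤ δ * P := mul_le_mul_of_nonneg_left hry (le_of_lt hδ0)
    calc ‖q n - v n‖ ≤ (1 - α2 n) * ‖T (p n) - T (u n)‖ + α2 n * ‖T (r n) - T (y n)‖ := by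
          rw [e]; exact combo_norm _ ha20 ha21 _ _
    _ ≤ (1 - α2 n) * (δ * P) + α2 n * (δ * P) := by
          exact add_le_add (mul_le_mul_of_nonneg_left hTpu (by linarith))
            (mul_le_mul_of_nonneg_left hry' ha20)
    _ = δ * P := by ring
  -- main step
  have e : p (n + 1) - u (n + 1) = (1 - α1 n) • (T (p n) - v n) +
      α1 n • (T (q n) - T (v n)) := by
    rw [hp n, hu n]; module
  have hqv' : ‖T (q n) - T (v n)‖ ≤ δ * (δ * P) := by
    calc ‖T (q n) - T (v n)‖ ≤ δ * ‖q n - v n‖ := hT _ hqn _ hvn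
    _ ≤ δ * (δ * P) := mul_le_mul_of_nonneg_left hqv (le_of_lt hδ0)
  have main : ‖p (n + 1) - u (n + 1)‖ ≤
      (1 - α1 n) * (δ * P + α2 n * δ * (α3 n * ((1 + δ) * Q))) + α1 n * (δ * (δ * P)) := by
    calc ‖p (n + 1) - u (n + 1)‖ ≤ (1 - α1 n) * ‖T (p n) - v n‖ +
          α1 n * ‖T (q n) - T (v n)‖ := by
          rw [e]; exact combo_norm _ ha10 ha11 _ _
    _ ≤ _ := add_le_add (mul_le_mul_of_nonneg_left hTpv (by linarith))
          (mul_le_mul_of_nonneg_left hqv' ha10)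
  refine main.trans ?_
  have h1 : (1 - α1 n) * (δ * P) + α1 n * (δ * (δ * P)) ≤ (1 - α1 n * (1 - δ)) * P := by
    have e1 : (1 - α1 n * (1 - δ)) * P - ((1 - α1 n) * (δ * P) + α1 n * (δ * (δ * P)))
        = ((1 - α1 n) * ((1 - δ) * (1 - δ)) + δ * (1 - δ)) * P := by ring
    have pos : 0 ≤ ((1 - α1 n) * ((1 - δ) * (1 - δ)) + δ * (1 - δ)) * P :=
      mul_nonneg (add_nonneg (mul_nonneg (by linarith)
        (mul_nonneg (by linarith) (by linarith))) (mul_nonneg hδ0.le (by linarith))) hPnn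
    linarith
  have h2 : (1 - α1 n) * (α2 n * δ * (α3 n * ((1 + δ) * Q))) ≤
      (1 - α1 n) * (2 + α2 n * δ * α3 n) * (1 + δ) * Q := by
    nlinarith [mul_nonneg (mul_nonneg ha20 (le_of_lt hδ0)) ha30,
      mul_nonneg hQnn (mul_nonneg (by linarith : (0:ℝ) ≤ 1 - α1 n) (by linarith : (0:ℝ) ≤ 1 + δ))]
  nlinarith [h1, h2]
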